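/- Let Δ be a connected graph of diameter 2, N an Abelian group, ℓ : D(Δ) → N a voltage assignment, and S ≤ N a subgroup containing the voltage of every cycle of length at most 5 in Δ. Then the voltage of every cycle in Δ lies in S. -/

import Mathlib

private def volt {V N : Type*} [AddCommGroup N] (ℓ : V → V → N) : List V → N
  | a :: b :: t => ℓ a b + volt ℓ (b :: t)
  | _ => 0

private lemma volt_ofFn {V N : Type*} [AddCommGroup N] (ℓ : V → V → N) :
    ∀ (k : ℕ) (c : Fin (k + 1) → V),
      volt ℓ (List.ofFn c) = ∑ j : Fin k, ℓ (c j.castSucc) (c j.succ) := by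
  intro k
  induction k with
  | zero => intro c; simp [List.ofFn_succ, volt]
  | succ k ih =>
      intro c
      rw [List.ofFn_succ, List.ofFn_succ]
      show ℓ (c 0) _ + volt ℓ _ = _
      rw [show ((fun i : Fin (k+1) => c i.succ) 0 :: List.ofFn fun i : Fin k => c i.succ.succ)
            = List.ofFn (fun i : Fin (k+1) => c i.succ) by rw [List.ofFn_succ]]
      rw [ih (fun i : Fin (k+1) => c i.succ), Fin.sum_univ_succ]
      simp [Fin.succ_castSucc, -Fin.castSucc_succ]

private lemma volt_aux {V N : Type*} [AddCommGroup N] (Δ : SimpleGraph V) (ℓ : V → V → N)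
    (hℓ : ∀ u v, Δ.Adj u v → ℓ u v = - ℓ v u)
    (hdiam : ∀ u v : V, u = v ∨ Δ.Adj u v ∨ ∃ w, Δ.Adj u w ∧ Δ.Adj w v)
    (S : AddSubgroup N)
    (hshortL : ∀ (a : V) (l : List V), (a :: l).length ≤ 6 → List.Chain' Δ.Adj (a :: l) →
      (a :: l).getLast? = some a → volt ℓ (a :: l) ∈ S) :
    ∀ (n : ℕ) (a : V) (l : List V), (a :: l).length ≤ n → List.Chain' Δ.Adj (a :: l) →
      (a :: l).getLast? = some a → volt ℓ (a :: l) ∈ S := by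
  intro n
  induction n using Nat.strong_induction_on with
  | _ n ih =>
    intro a l hlen hch hlast
    by_cases hs : (a :: l).length ≤ 6
    · exact hshortL a l hs hch hlast
    · push_neg at hs
      obtain ⟨b, c, d, e, rest, rfl⟩ : ∃ b c d e rest, l = b :: c :: d :: e :: rest := by
        rcases l with _ | ⟨b, _ | ⟨c, _ | ⟨d, _ | ⟨e, rest⟩⟩⟩⟩ <;>
          first
          | exact ⟨_, _, _, _, _, rfl⟩
          | simp at hs
      simp only [List.Chain', List.isChain_cons_cons] at hch
      obtain ⟨hab, hbc, hcd, hde, hrest⟩ := hch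
      have hlast' : (e :: rest).getLast? = some a := by
        simpa using hlast
      have hd : List.Chain' Δ.Adj (d :: e :: rest) := List.isChain_cons_cons.mpr ⟨hde, hrest⟩
      have hlen' : (d :: e :: rest).length + 3 ≤ n := by simp at hlen ⊢; omega
      rcases hdiam a d with rfl | had | ⟨w, haw, hwd⟩
      · -- a = d
        have h1 : volt ℓ [a, b, c, a] ∈ S := by
          refine hshortL a [b, c, a] (by simp) ?_ (by simp)
          simp [List.Chain', List.isChain_cons_cons, hab, hbc, hcd]
        have h2 : volt ℓ (a :: e :: rest) ∈ S := by
          refine ih ((a :: e :: rest).length) (by omega) a (e :: rest) le_rfl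
            (List.isChain_cons_cons.mpr ⟨hde, hrest⟩) (by simpa using hlast')
        have := add_mem h1 h2
        show ℓ a b + (ℓ b c + (ℓ c a + volt ℓ (a :: e :: rest))) ∈ S
        convert this using 1
        show _ = (ℓ a b + (ℓ b c + (ℓ c a + 0))) + _
        abel
      · -- Adj a d
        have h1 : volt ℓ [a, b, c, d, a] ∈ S := by
          refine hshortL a [b, c, d, a] (by simp) ?_ (by simp)
          simp [List.Chain', List.isChain_cons_cons, hab, hbc, hcd, had.symm]
        have h2 : volt ℓ (a :: d :: e :: rest) ∈ S := by
          refine ih ((a :: d :: e :: rest).length) (by simp at hlen' ⊢; omega) a (d :: e :: rest)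
            le_rfl (List.isChain_cons_cons.mpr ⟨had, hd⟩) (by simpa using hlast')
        have h3 := add_mem h1 h2
        show ℓ a b + (ℓ b c + (ℓ c d + volt ℓ (d :: e :: rest))) ∈ S
        convert h3 using 1
        show _ = (ℓ a b + (ℓ b c + (ℓ c d + (ℓ d a + 0)))) + (ℓ a d + volt ℓ (d :: e :: rest))
        rw [hℓ a d had]
        abel
      · -- middle vertex w
        have h1 : volt ℓ [a, b, c, d, w, a] ∈ S := by
          refine hshortL a [b, c, d, w, a] (by simp) ?_ (by simp)
          simp [List.Chain', List.isChain_cons_cons, hab, hbc, hcd, hwd.symm, haw.symm]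
        have h2 : volt ℓ (a :: w :: d :: e :: rest) ∈ S := by
          refine ih ((a :: w :: d :: e :: rest).length) (by simp at hlen' ⊢; omega) a
            (w :: d :: e :: rest) le_rfl
            (List.isChain_cons_cons.mpr ⟨haw, List.isChain_cons_cons.mpr ⟨hwd, hd⟩⟩) (by simpa using hlast')
        have h3 := add_mem h1 h2
        show ℓ a b + (ℓ b c + (ℓ c d + volt ℓ (d :: e :: rest))) ∈ S
        convert h3 using 1
        show _ = (ℓ a b + (ℓ b c + (ℓ c d + (ℓ d w + (ℓ w a + 0))))) +
          (ℓ a w + (ℓ w d + volt ℓ (d :: e :: rest)))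
        rw [hℓ a w haw, hℓ w d hwd]
        abel

/-- in a connected graph of diameter 2, if a subgroup `S` of the (Abelian)
voltage group contains the voltage of every cycle of length at most 5, then it contains the
voltage of every cycle. -/
theorem cycle_voltages_from_short_cycles {V N : Type*} [AddCommGroup N]
    (Δ : SimpleGraph V) (ℓ : V → V → N)
    (hℓ : ∀ u v, Δ.Adj u v → ℓ u v = - ℓ v u)
    (hconn : Δ.Connected)
    -- diameter 2: any two vertices are joined by a path of length at most 2
    (hdiam : ∀ u v : V, u = v ∨ Δ.Adj u v ∨ ∃ w, Δ.Adj u w ∧ Δ.Adj w v)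
    (S : AddSubgroup N)
    -- S contains the voltage of every cycle of length at most 5:
    (hshort : ∀ (k : ℕ), k ≤ 5 → ∀ c : Fin (k + 1) → V,
      c 0 = c (Fin.last k) → (∀ j : Fin k, Δ.Adj (c j.castSucc) (c j.succ)) →
      (∑ j : Fin k, ℓ (c j.castSucc) (c j.succ)) ∈ S) :
    -- then S contains the voltage of every cycle:
    ∀ (k : ℕ) (c : Fin (k + 1) → V),
      c 0 = c (Fin.last k) → (∀ j : Fin k, Δ.Adj (c j.castSucc) (c j.succ)) →
      (∑ j : Fin k, ℓ (c j.castSucc) (c j.succ)) ∈ S := by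
  -- first, a list version of `hshort`
  have hshortL : ∀ (a : V) (l : List V), (a :: l).length ≤ 6 → List.Chain' Δ.Adj (a :: l) →
      (a :: l).getLast? = some a → volt ℓ (a :: l) ∈ S := by
    intro a l hlen hch hlast
    set k := l.length with hk
    have hlenc : (a :: l).length = k + 1 := by simp [hk]
    set c : Fin (k + 1) → V := fun i => (a :: l).get (Fin.cast hlenc.symm i) with hc
    have hofn : List.ofFn c = a :: l := by
      apply List.ext_get (by simp [hlenc])
      intro i h1 h2
      simp [c, List.get_ofFn]
      cases i <;> simp
    have h0 : c 0 = c (Fin.last k) := by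
      have ha : c 0 = a := rfl
      have hb : c (Fin.last k) = (a :: l).getLast (by simp) := by
        rw [List.getLast_eq_getElem]
        simp [c, hlenc]
      rw [ha, hb]
      have := List.getLast?_eq_getLast (l := a :: l) (by simp)
      rw [this] at hlast
      exact (Option.some_injective _ hlast).symm
    have hadj : ∀ j : Fin k, Δ.Adj (c j.castSucc) (c j.succ) := by
      simp only [List.Chain'] at hch
      rw [List.isChain_iff_getElem] at hch
      intro j
      have := hch j.1 (by simp [hlenc])
      convert this using 2 <;> simp [c] <;> rfl
    have := hshort k (by simp at hlen; omega) c h0 hadj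
    rwa [← volt_ofFn, hofn] at this
  intro k c h0 hadj
  have hch : List.Chain' Δ.Adj (List.ofFn c) := by
    simp only [List.Chain']
    rw [List.isChain_ofFn]
    intro i hi
    have := hadj ⟨i, by omega⟩
    convert this using 2 <;> exact Fin.ext rfl
  have hlast : (List.ofFn c).getLast? = some (c 0) := by
    rw [List.getLast?_eq_getLast (l := List.ofFn c) (by simp), List.getLast_ofFn]
    congr 1
    conv_rhs => rw [h0]
    congr 1
  rw [← volt_ofFn]
  rw [List.ofFn_succ] at hch hlast ⊢
  exact volt_aux Δ ℓ hℓ hdiam S hshortL _ (c 0) _ le_rfl hch hlast
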